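/- Let (X, L) be a Pervin space, g ∈ 𝓛(X, L), and ν, μ bounded valuations on (X, L). Assume that for every nonnegative dyadic rational r and every crescent C ⊆ g⁻¹((r,∞]), ν(C) ≥ r·μ(C). Then ν(C) ≥ (g·μ)(C) for every C in the algebra A(L) generated by L; in particular ν ≥ g·μ on L. -/

import Mathlib

open scoped ENNReal NNReal

variable {X : Type*}

/-- A lattice of subsets of `X`. -/
def IsLatt (L : Set (Set X)) : Prop :=
  ∅ ∈ L ∧ Set.univ ∈ L ∧ (∀ U ∈ L, ∀ V ∈ L, U ∪ V ∈ L) ∧ (∀ U ∈ L, ∀ V ∈ L, U ∩ V ∈ L)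

/-- An ω-topology: a lattice of subsets closed under countable unions. -/
def IsOmegaTop (L : Set (Set X)) : Prop :=
  IsLatt L ∧ ∀ U : ℕ → Set X, (∀ n, U n ∈ L) → (⋃ n, U n) ∈ L

/-- A valuation on `(X, L)`: strict, monotonic, modular. -/
def IsVal (L : Set (Set X)) (ν : Set X → ℝ≥0∞) : Prop :=
  ν ∅ = 0 ∧ (∀ U ∈ L, ∀ V ∈ L, U ⊆ V → ν U ≤ ν V) ∧
    (∀ U ∈ L, ∀ V ∈ L, ν U + ν V = ν (U ∪ V) + ν (U ∩ V))

/-- ω-continuity of a valuation: it preserves suprema of monotone sequences of sets. -/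
def IsOmegaContVal (L : Set (Set X)) (ν : Set X → ℝ≥0∞) : Prop :=
  ∀ U : ℕ → Set X, (∀ n, U n ∈ L) → Monotone U → ν (⋃ n, U n) = ⨆ n, ν (U n)

/-- `𝓛(X, L)`: maps `h : X → ℝ≥0∞` with `h⁻¹((t,∞]) ∈ L` for all `t ≥ 0`. -/
def MemL (L : Set (Set X)) (h : X → ℝ≥0∞) : Prop :=
  ∀ t : ℝ≥0, {x | (t : ℝ≥0∞) < h x} ∈ L

/-- The improper Riemann integral `∫₀^∞ f(t) dt` of an antitonic map `f : ℝ≥0 → ℝ≥0∞`,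
realized as a Lebesgue integral over `(0, ∞)`. -/
noncomputable def riem (f : ℝ≥0 → ℝ≥0∞) : ℝ≥0∞ :=
  ∫⁻ t in Set.Ioi (0 : ℝ), f t.toNNReal

/-- The Choquet integral `∫ h dν = ∫₀^∞ ν(h⁻¹((t,∞])) dt`. -/
noncomputable def choquet (ν : Set X → ℝ≥0∞) (h : X → ℝ≥0∞) : ℝ≥0∞ :=
  riem fun t => ν {x | (t : ℝ≥0∞) < h x}

/-- The characteristic map of `U`. -/
noncomputable def chi (U : Set X) : X → ℝ≥0∞ :=
  U.indicator fun _ => 1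

/-- `(g·μ)(U) := ∫ χ_U·g dμ`. -/
noncomputable def densMul (g : X → ℝ≥0∞) (μ : Set X → ℝ≥0∞) (U : Set X) : ℝ≥0∞ :=
  choquet μ fun x => chi U x * g x

/-- `(g·μ)(C) = ∫₀^∞ μ(C ∩ g⁻¹((t,∞])) dt`, the explicit formula for the density valuation. -/
noncomputable def densF (g : X → ℝ≥0∞) (μ : Set X → ℝ≥0∞) (C : Set X) : ℝ≥0∞ :=
  riem fun t => μ (C ∩ {x | (t : ℝ≥0∞) < g x})

/-- The smallest algebra of subsets of `X` containing `L`. -/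
def genAlg (L : Set (Set X)) : Set (Set X) :=
  {C | ∀ A : Set (Set X),
    (L ⊆ A ∧ ∅ ∈ A ∧ (∀ S ∈ A, Sᶜ ∈ A) ∧ (∀ S ∈ A, ∀ T ∈ A, S ∪ T ∈ A)) → C ∈ A}

/-- A crescent: a difference of two elements of `L`. -/
def IsCrescent (L : Set (Set X)) (C : Set X) : Prop :=
  ∃ U ∈ L, ∃ V ∈ L, C = U \ V

/-- A signed valuation: strict and modular, real-valued. -/
def IsSignedVal (L : Set (Set X)) (ς : Set X → ℝ) : Prop :=
  ς ∅ = 0 ∧ ∀ U ∈ L, ∀ V ∈ L, ς (U ∪ V) + ς (U ∩ V) = ς U + ς V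

/-- The Hahn decomposition property of a signed valuation `ς` on `(X, L)`: stated via any
signed valuation extending `ς` to the generated algebra (such an extension is unique). -/
def HasHahn (L : Set (Set X)) (ς : Set X → ℝ) : Prop :=
  ∀ ς' : Set X → ℝ, IsSignedVal (genAlg L) ς' → (∀ U ∈ L, ς' U = ς U) →
    ∃ U ∈ L, (∀ C, IsCrescent L C → C ⊆ U → 0 ≤ ς' C) ∧
      (∀ C, IsCrescent L C → Disjoint C U → ς' C ≤ 0)

/-- A nonnegative dyadic rational. -/
def IsDyadic (r : ℝ≥0) : Prop := ∃ p n : ℕ, r = (p : ℝ≥0) / 2 ^ n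


section Aux

open scoped Classical

variable {L : Set (Set X)}

lemma genAlg_mem_of_mem {U : Set X} (hU : U ∈ L) : U ∈ genAlg L :=
  fun _ hA => hA.1 hU

lemma genAlg_empty : (∅ : Set X) ∈ genAlg L :=
  fun _ hA => hA.2.1

lemma genAlg_compl {C : Set X} (hC : C ∈ genAlg L) : Cᶜ ∈ genAlg L :=
  fun A hA => hA.2.2.1 C (hC A hA)

lemma genAlg_union {C D : Set X} (hC : C ∈ genAlg L) (hD : D ∈ genAlg L) :
    C ∪ D ∈ genAlg L :=
  fun A hA => hA.2.2.2 C (hC A hA) D (hD A hA)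

lemma genAlg_univ : (Set.univ : Set X) ∈ genAlg L := by
  have := genAlg_compl (genAlg_empty (L := L) (X := X))
  simpa using this

lemma genAlg_inter {C D : Set X} (hC : C ∈ genAlg L) (hD : D ∈ genAlg L) :
    C ∩ D ∈ genAlg L := by
  have h := genAlg_compl (genAlg_union (genAlg_compl hC) (genAlg_compl hD))
  simpa [Set.compl_union] using h

lemma genAlg_diff {C D : Set X} (hC : C ∈ genAlg L) (hD : D ∈ genAlg L) :
    C \ D ∈ genAlg L := by
  have := genAlg_inter hC (genAlg_compl hD)
  simpa [Set.diff_eq] using this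

lemma crescent_mem_genAlg {C : Set X} (hC : IsCrescent L C) : C ∈ genAlg L := by
  obtain ⟨U, hU, V, hV, rfl⟩ := hC
  exact genAlg_diff (genAlg_mem_of_mem hU) (genAlg_mem_of_mem hV)

/-- finite disjoint union of crescents -/
def FDU (L : Set (Set X)) (C : Set X) : Prop :=
  ∃ S : Finset (Set X), (∀ D ∈ S, IsCrescent L D) ∧
    (↑S : Set (Set X)).PairwiseDisjoint id ∧ C = ⋃₀ ↑S

lemma FDU.mem_genAlg {C : Set X} (h : FDU L C) : C ∈ genAlg L := by
  obtain ⟨S, hS, -, rfl⟩ := h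
  classical
  induction S using Finset.induction_on with
  | empty => simpa using genAlg_empty
  | @insert a s _ ih =>
    rw [Finset.coe_insert, Set.sUnion_insert]
    exact genAlg_union (crescent_mem_genAlg (hS a (Finset.mem_insert_self a s)))
      (ih fun D hD => hS D (Finset.mem_insert_of_mem hD))

lemma FDU_of_crescent {C : Set X} (h : IsCrescent L C) : FDU L C :=
  ⟨{C}, by simpa using h, by simp, by simp⟩

lemma FDU_of_mem (hL : IsLatt L) {C : Set X} (h : C ∈ L) : FDU L C :=
  FDU_of_crescent ⟨C, h, ∅, hL.1, by simp⟩

lemma FDU_empty : FDU L (∅ : Set X) := ⟨∅, by simp, by simp, by simp⟩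

lemma FDU_pair {a b : Set X} (ha : IsCrescent L a) (hb : IsCrescent L b)
    (hab : Disjoint a b) : FDU L (a ∪ b) := by
  refine ⟨{a, b}, ?_, ?_, by simp⟩
  · intro D hD
    rcases Finset.mem_insert.1 hD with rfl | hD
    · exact ha
    · rcases Finset.mem_singleton.1 hD with rfl; exact hb
  · intro x hx y hy hne
    simp only [Finset.coe_insert, Finset.coe_singleton, Set.mem_insert_iff,
      Set.mem_singleton_iff] at hx hy
    rcases hx with rfl | rfl <;> rcases hy with rfl | rfl <;>
      simp_all [id] <;> [skip; exact hab.symm] <;> exact hab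

lemma FDU_inter (hL : IsLatt L) {C D : Set X} (hC : FDU L C) (hD : FDU L D) : FDU L (C ∩ D) := by
  obtain ⟨S, hScr, hSdisj, rfl⟩ := hC
  obtain ⟨T, hTcr, hTdisj, rfl⟩ := hD
  refine ⟨(S ×ˢ T).image fun p => p.1 ∩ p.2, ?_, ?_, ?_⟩
  · intro E hE
    simp only [Finset.mem_image, Finset.mem_product] at hE
    obtain ⟨⟨U, V⟩, ⟨hU, hV⟩, rfl⟩ := hE
    obtain ⟨U1, hU1, U2, hU2, rfl⟩ := hScr U hU
    obtain ⟨V1, hV1, V2, hV2, rfl⟩ := hTcr V hV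
    exact ⟨U1 ∩ V1, hL.2.2.2 _ hU1 _ hV1, U2 ∪ V2, hL.2.2.1 _ hU2 _ hV2, by
      ext x; simp [Set.mem_diff]; tauto⟩
  · intro x hx y hy hne
    simp only [Finset.coe_image, Set.mem_image, Finset.mem_coe,
      Finset.mem_product] at hx hy
    obtain ⟨⟨U, V⟩, ⟨hU, hV⟩, rfl⟩ := hx
    obtain ⟨⟨U', V'⟩, ⟨hU', hV'⟩, rfl⟩ := hy
    by_cases hUU : U = U'
    · subst hUU
      have hVV : V ≠ V' := fun h => hne (by rw [h])
      have := hTdisj hV hV' hVV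
      exact Set.disjoint_of_subset Set.inter_subset_right Set.inter_subset_right this
    · have := hSdisj hU hU' hUU
      exact Set.disjoint_of_subset Set.inter_subset_left Set.inter_subset_left this
  · ext x
    simp only [Set.mem_inter_iff, Set.mem_sUnion, Finset.coe_image, Set.mem_image,
      Finset.mem_coe, Finset.mem_product]
    constructor
    · rintro ⟨⟨U, hU, hxU⟩, ⟨V, hV, hxV⟩⟩
      exact ⟨U ∩ V, ⟨⟨U, V⟩, ⟨hU, hV⟩, rfl⟩, hxU, hxV⟩
    · rintro ⟨E, ⟨⟨U, V⟩, ⟨hU, hV⟩, rfl⟩, hxU, hxV⟩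
      exact ⟨⟨U, hU, hxU⟩, ⟨V, hV, hxV⟩⟩

lemma FDU_compl_crescent (hL : IsLatt L) {C : Set X} (h : IsCrescent L C) :
    FDU L Cᶜ := by
  obtain ⟨U, hU, V, hV, rfl⟩ := h
  have h1 : IsCrescent L (Set.univ \ U) := ⟨Set.univ, hL.2.1, U, hU, rfl⟩
  have h2 : IsCrescent L (U ∩ V) := ⟨U ∩ V, hL.2.2.2 _ hU _ hV, ∅, hL.1, by simp⟩
  have hd : Disjoint (Set.univ \ U) (U ∩ V) := by
    rw [Set.disjoint_iff_inter_eq_empty]; ext x; simp; tauto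
  have := FDU_pair h1 h2 hd
  have he : (Set.univ \ U) ∪ (U ∩ V) = (U \ V)ᶜ := by
    ext x; simp [Set.mem_diff]; tauto
  rwa [he] at this

lemma FDU_compl (hL : IsLatt L) {C : Set X} (h : FDU L C) : FDU L Cᶜ := by
  obtain ⟨S, hScr, -, rfl⟩ := h
  classical
  induction S using Finset.induction_on with
  | empty =>
    simp only [Finset.coe_empty, Set.sUnion_empty, Set.compl_empty]
    exact FDU_of_mem hL hL.2.1
  | @insert a s _ ih =>
    rw [Finset.coe_insert, Set.sUnion_insert, Set.compl_union]
    exact FDU_inter hL (FDU_compl_crescent hL (hScr a (Finset.mem_insert_self a s)))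
      (ih fun D hD => hScr D (Finset.mem_insert_of_mem hD))

lemma FDU_union (hL : IsLatt L) {C D : Set X} (hC : FDU L C) (hD : FDU L D) :
    FDU L (C ∪ D) := by
  have := FDU_compl hL (FDU_inter hL (FDU_compl hL hC) (FDU_compl hL hD))
  simpa [Set.compl_inter, compl_compl] using this

lemma genAlg_subset_FDU (hL : IsLatt L) : genAlg L ⊆ {C | FDU L C} := by
  intro C hC
  exact hC {C | FDU L C} ⟨fun U hU => FDU_of_mem hL hU, FDU_empty,
    fun S hS => FDU_compl hL hS, fun S hS T hT => FDU_union hL hS hT⟩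

end Aux


section Aux2

variable {L : Set (Set X)}

lemma val_add_disjoint {ν' : Set X → ℝ≥0∞} (hν' : IsVal (genAlg L) ν') {C D : Set X}
    (hC : C ∈ genAlg L) (hD : D ∈ genAlg L) (hd : Disjoint C D) :
    ν' (C ∪ D) = ν' C + ν' D := by
  have h := hν'.2.2 C hC D hD
  rw [Set.disjoint_iff_inter_eq_empty.1 hd, hν'.1, add_zero] at h
  exact h.symm

lemma genAlg_sUnion (S : Finset (Set X)) (hS : ∀ D ∈ S, D ∈ genAlg L) :
    ⋃₀ ↑S ∈ genAlg L := by
  classical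
  induction S using Finset.induction_on with
  | empty => simpa using genAlg_empty
  | @insert a s ha ih =>
    rw [Finset.coe_insert, Set.sUnion_insert]
    exact genAlg_union (hS a (Finset.mem_insert_self a s))
      (ih fun D hD => hS D (Finset.mem_insert_of_mem hD))

lemma val_sum {ν' : Set X → ℝ≥0∞} (hν' : IsVal (genAlg L) ν') (S : Finset (Set X))
    (hS : ∀ D ∈ S, D ∈ genAlg L) (hd : (↑S : Set (Set X)).PairwiseDisjoint id) :
    ν' (⋃₀ ↑S) = ∑ D ∈ S, ν' D := by
  classical
  induction S using Finset.induction_on with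
  | empty => simpa using hν'.1
  | @insert a s ha ih =>
    rw [Finset.coe_insert] at hd
    rw [Finset.coe_insert, Set.sUnion_insert, Finset.sum_insert ha]
    have hd' := (Set.pairwiseDisjoint_insert.1 hd)
    have hdisj : Disjoint a (⋃₀ ↑s) := by
      rw [Set.disjoint_sUnion_right]
      intro b hb
      exact hd'.2 b hb (fun h => ha (by rwa [← h] at hb))
    rw [val_add_disjoint hν' (hS a (Finset.mem_insert_self a s))
      (genAlg_sUnion s fun D hD => hS D (Finset.mem_insert_of_mem hD)) hdisj,
      ih (fun D hD => hS D (Finset.mem_insert_of_mem hD)) hd'.1]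

lemma hyp_genAlg (hL : IsLatt L) {g : X → ℝ≥0∞} {μ' ν' : Set X → ℝ≥0∞}
    (hν' : IsVal (genAlg L) ν') (hμ' : IsVal (genAlg L) μ')
    (hyp : ∀ r : ℝ≥0, IsDyadic r → ∀ C : Set X, IsCrescent L C →
      C ⊆ {x | (r : ℝ≥0∞) < g x} → (r : ℝ≥0∞) * μ' C ≤ ν' C) :
    ∀ r : ℝ≥0, IsDyadic r → ∀ C ∈ genAlg L, C ⊆ {x | (r : ℝ≥0∞) < g x} →
      (r : ℝ≥0∞) * μ' C ≤ ν' C := by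
  intro r hr C hC hsub
  obtain ⟨S, hScr, hSd, rfl⟩ := genAlg_subset_FDU hL hC
  have hSmem : ∀ D ∈ S, D ∈ genAlg L := fun D hD => crescent_mem_genAlg (hScr D hD)
  rw [val_sum hμ' S hSmem hSd, val_sum hν' S hSmem hSd, Finset.mul_sum]
  exact Finset.sum_le_sum fun D hD => hyp r hr D (hScr D hD)
    ((Set.subset_sUnion_of_mem (Finset.mem_coe.2 hD)).trans hsub)

lemma telescope (hL : IsLatt L) {g : X → ℝ≥0∞} {μ' ν' : Set X → ℝ≥0∞}
    (hν' : IsVal (genAlg L) ν') (hμ' : IsVal (genAlg L) μ')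
    (hyp' : ∀ r : ℝ≥0, IsDyadic r → ∀ C ∈ genAlg L, C ⊆ {x | (r : ℝ≥0∞) < g x} →
      (r : ℝ≥0∞) * μ' C ≤ ν' C) (n : ℕ) :
    ∀ K m : ℕ, ∀ C : ℕ → Set X, (∀ k, C k ∈ genAlg L) → (∀ k, C (k+1) ⊆ C k) →
      (∀ k, C k ⊆ {x | ((((m + k : ℕ) : ℝ≥0) * (2 ^ n)⁻¹ : ℝ≥0) : ℝ≥0∞) < g x}) →
      (∑ k ∈ Finset.range K, (((2 ^ n : ℝ≥0)⁻¹ : ℝ≥0) : ℝ≥0∞) * μ' (C (k+1)))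
        + (((m : ℝ≥0) * (2 ^ n)⁻¹ : ℝ≥0) : ℝ≥0∞) * μ' (C 0) ≤ ν' (C 0) := by
  intro K
  induction K with
  | zero =>
    intro m C hmem hanti hsub
    simp only [Finset.range_zero, Finset.sum_empty, zero_add]
    refine hyp' _ ⟨m, n, by rw [div_eq_mul_inv]⟩ (C 0) (hmem 0) ?_
    simpa using hsub 0
  | succ K ih =>
    intro m C hmem hanti hsub
    have hdisj : Disjoint (C 1) (C 0 \ C 1) := Set.disjoint_sdiff_right
    have hun : C 1 ∪ (C 0 \ C 1) = C 0 := Set.union_diff_cancel (hanti 0)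
    have hmemd : C 0 \ C 1 ∈ genAlg L := genAlg_diff (hmem 0) (hmem 1)
    have hμ0 : μ' (C 0) = μ' (C 1) + μ' (C 0 \ C 1) := by
      rw [← val_add_disjoint hμ' (hmem 1) hmemd hdisj, hun]
    have hν0 : ν' (C 0) = ν' (C 1) + ν' (C 0 \ C 1) := by
      rw [← val_add_disjoint hν' (hmem 1) hmemd hdisj, hun]
    have hIH := ih (m+1) (fun k => C (k+1)) (fun k => hmem (k+1)) (fun k => hanti (k+1))
      (fun k => by
        have h : (m + 1) + k = m + (k + 1) := by omega
        rw [h]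
        exact hsub (k+1))
    have hD : (((m : ℝ≥0) * (2 ^ n)⁻¹ : ℝ≥0) : ℝ≥0∞) * μ' (C 0 \ C 1) ≤ ν' (C 0 \ C 1) := by
      refine hyp' _ ⟨m, n, by rw [div_eq_mul_inv]⟩ _ hmemd ?_
      refine (Set.diff_subset.trans ?_)
      simpa using hsub 0
    rw [Finset.sum_range_succ', hμ0, hν0]
    push_cast at hIH hD ⊢
    set a := ∑ k ∈ Finset.range K, ((2 : ℝ≥0∞) ^ n)⁻¹ * μ' (C (k+1+1)) with ha
    set dE := ((2 : ℝ≥0∞) ^ n)⁻¹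
    set μ1 := μ' (C 1); set μd := μ' (C 0 \ C 1); set ν1 := ν' (C 1); set νd := ν' (C 0 \ C 1)
    calc a + dE * μ1 + (m : ℝ≥0∞) * dE * (μ1 + μd)
        = (a + ((m : ℝ≥0∞) + 1) * dE * μ1) + (m : ℝ≥0∞) * dE * μd := by ring
      _ ≤ ν1 + νd := add_le_add hIH hD
  
end Aux2


section Aux3

open MeasureTheory

variable {L : Set (Set X)}

lemma main_bound (hL : IsLatt L) {g : X → ℝ≥0∞} (hg : MemL L g) {μ' ν' : Set X → ℝ≥0∞}
    (hν' : IsVal (genAlg L) ν') (hμ' : IsVal (genAlg L) μ')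
    (hμb' : μ' Set.univ < ⊤)
    (hyp' : ∀ r : ℝ≥0, IsDyadic r → ∀ C ∈ genAlg L, C ⊆ {x | (r : ℝ≥0∞) < g x} →
      (r : ℝ≥0∞) * μ' C ≤ ν' C)
    {C : Set X} (hC : C ∈ genAlg L) : densF g μ' C ≤ ν' C := by
  have key : ∀ n : ℕ, densF g μ' C ≤ ν' C + (((2 ^ n : ℝ≥0)⁻¹ : ℝ≥0) : ℝ≥0∞) * μ' C := by
    intro n
    set δ : ℝ≥0 := (2 ^ n)⁻¹ with hδdef
    have hδpos : (0 : ℝ) < (δ : ℝ) := by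
      rw [hδdef]; positivity
    set Ck : ℕ → Set X := fun k => C ∩ {x | (((k : ℝ≥0) * δ : ℝ≥0) : ℝ≥0∞) < g x} with hCk
    have hCkmem : ∀ k, Ck k ∈ genAlg L := fun k =>
      genAlg_inter hC (genAlg_mem_of_mem (hg _))
    have hCkanti : ∀ k, Ck (k+1) ⊆ Ck k := by
      intro k x hx
      have hx2 : ((((k+1 : ℕ) : ℝ≥0) * δ : ℝ≥0) : ℝ≥0∞) < g x := hx.2
      refine ⟨hx.1, show (((k : ℝ≥0) * δ : ℝ≥0) : ℝ≥0∞) < g x from lt_of_le_of_lt ?_ hx2⟩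
      refine ENNReal.coe_le_coe.2 ?_
      exact mul_le_mul_of_nonneg_right (by exact_mod_cast Nat.le_succ k) zero_le
    have hCksub : ∀ k, Ck k ⊆
        {x | ((((0 + k : ℕ) : ℝ≥0) * δ : ℝ≥0) : ℝ≥0∞) < g x} := by
      intro k x hx
      simpa using hx.2
    set F : ℝ → ℝ≥0∞ := fun t => ∑' k : ℕ,
      (Set.Ico ((k : ℝ) * (δ : ℝ)) (((k : ℝ) + 1) * (δ : ℝ))).indicator
        (fun _ => μ' (Ck k)) t with hF
    have hb1 : densF g μ' C ≤ ∫⁻ t in Set.Ioi (0 : ℝ), F t := by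
      unfold densF riem
      refine lintegral_mono_ae ?_
      rw [ae_restrict_iff' measurableSet_Ioi]
      refine ae_of_all _ fun t ht => ?_
      have ht0 : (0 : ℝ) < t := ht
      set k := ⌊t / (δ : ℝ)⌋₊ with hk
      have hdiv0 : (0 : ℝ) ≤ t / (δ : ℝ) := le_of_lt (div_pos ht0 hδpos)
      have h1 : (k : ℝ) * (δ : ℝ) ≤ t := by
        rw [← le_div_iff₀ hδpos]
        exact Nat.floor_le hdiv0
      have h2 : t < ((k : ℝ) + 1) * (δ : ℝ) := by
        rw [← div_lt_iff₀ hδpos]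
        exact Nat.lt_floor_add_one _
      have hmem : t ∈ Set.Ico ((k : ℝ) * (δ : ℝ)) (((k : ℝ) + 1) * (δ : ℝ)) := ⟨h1, h2⟩
      have hle1 : μ' (C ∩ {x | ((t.toNNReal : ℝ≥0∞)) < g x}) ≤ μ' (Ck k) := by
        refine hμ'.2.1 _ (genAlg_inter hC (genAlg_mem_of_mem (hg _))) _ (hCkmem k) ?_
        intro x hx
        have hx2 : ((t.toNNReal : ℝ≥0∞)) < g x := hx.2
        refine ⟨hx.1, show (((k : ℝ≥0) * δ : ℝ≥0) : ℝ≥0∞) < g x from lt_of_le_of_lt ?_ hx2⟩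
        refine ENNReal.coe_le_coe.2 ?_
        rw [Real.le_toNNReal_iff_coe_le (le_of_lt ht0)]
        push_cast
        exact h1
      refine le_trans hle1 ?_
      have := ENNReal.le_tsum (f := fun j : ℕ =>
        (Set.Ico ((j : ℝ) * (δ : ℝ)) (((j : ℝ) + 1) * (δ : ℝ))).indicator
          (fun _ => μ' (Ck j)) t) k
      rwa [Set.indicator_of_mem hmem] at this
    have hb2 : ∫⁻ t in Set.Ioi (0 : ℝ), F t ≤ ∑' k : ℕ, μ' (Ck k) * (δ : ℝ≥0∞) := by
      refine le_trans (setLIntegral_le_lintegral _ _) ?_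
      rw [hF, lintegral_tsum fun k =>
        ((measurable_const.indicator measurableSet_Ico)).aemeasurable]
      refine le_of_eq (tsum_congr fun k => ?_)
      rw [lintegral_indicator measurableSet_Ico, setLIntegral_const, Real.volume_Ico,
        show ((k : ℝ) + 1) * (δ : ℝ) - (k : ℝ) * (δ : ℝ) = (δ : ℝ) by ring,
        ENNReal.ofReal_coe_nnreal]
    have hsplit : ∑' k : ℕ, μ' (Ck k) * (δ : ℝ≥0∞)
        = μ' (Ck 0) * (δ : ℝ≥0∞) + ∑' k : ℕ, μ' (Ck (k+1)) * (δ : ℝ≥0∞) :=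
      tsum_eq_zero_add' ENNReal.summable
    have htail : ∑' k : ℕ, μ' (Ck (k+1)) * (δ : ℝ≥0∞) ≤ ν' C := by
      refine ENNReal.tsum_le_of_sum_range_le fun K => ?_
      have htel := telescope hL hν' hμ' hyp' n K 0 Ck hCkmem hCkanti hCksub
      have h0 : (((0 : ℕ) : ℝ≥0) * δ : ℝ≥0) = 0 := by simp
      rw [h0] at htel
      simp only [ENNReal.coe_zero, zero_mul, add_zero] at htel
      have hCk0 : ν' (Ck 0) ≤ ν' C := hν'.2.1 _ (hCkmem 0) _ hC Set.inter_subset_left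
      refine le_trans (le_of_eq ?_) (le_trans htel hCk0)
      exact Finset.sum_congr rfl fun k _ => mul_comm _ _
    have hCk0μ : μ' (Ck 0) ≤ μ' C := hμ'.2.1 _ (hCkmem 0) _ hC Set.inter_subset_left
    calc densF g μ' C ≤ ∑' k : ℕ, μ' (Ck k) * (δ : ℝ≥0∞) := le_trans hb1 hb2
      _ = μ' (Ck 0) * (δ : ℝ≥0∞) + ∑' k : ℕ, μ' (Ck (k+1)) * (δ : ℝ≥0∞) := hsplit
      _ ≤ μ' C * (δ : ℝ≥0∞) + ν' C := add_le_add (mul_le_mul_left hCk0μ _) htail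
      _ = ν' C + (δ : ℝ≥0∞) * μ' C := by ring
  have hμC : μ' C < ⊤ :=
    lt_of_le_of_lt (hμ'.2.1 _ hC _ genAlg_univ (Set.subset_univ C)) hμb'
  refine ENNReal.le_of_forall_pos_le_add fun ε hε _ => ?_
  have hεpos : ((ε : ℝ≥0∞) / (μ' C + 1)) ≠ 0 := by
    refine ne_of_gt (ENNReal.div_pos ?_ ?_)
    · exact_mod_cast hε.ne'
    · exact ENNReal.add_ne_top.2 ⟨hμC.ne, ENNReal.one_ne_top⟩
  obtain ⟨n, hn⟩ := ENNReal.exists_inv_two_pow_lt hεpos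
  have hcoe : (((2 ^ n : ℝ≥0)⁻¹ : ℝ≥0) : ℝ≥0∞) = (2 : ℝ≥0∞)⁻¹ ^ n := by
    rw [ENNReal.coe_inv (by positivity), ENNReal.coe_pow, ENNReal.inv_pow]
    norm_num
  have hsmall : (((2 ^ n : ℝ≥0)⁻¹ : ℝ≥0) : ℝ≥0∞) * μ' C ≤ ε := by
    rw [hcoe]
    calc (2 : ℝ≥0∞)⁻¹ ^ n * μ' C ≤ ((ε : ℝ≥0∞) / (μ' C + 1)) * (μ' C + 1) :=
          mul_le_mul' hn.le (le_add_right le_rfl)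
      _ = ε := ENNReal.div_mul_cancel (by simp) (ENNReal.add_ne_top.2 ⟨hμC.ne, ENNReal.one_ne_top⟩)
  exact le_trans (key n) (add_le_add_right hsmall _)

end Aux3

/-- if `ν(C) ≥ r·μ(C)` for every nonnegative dyadic `r` and every crescent
`C ⊆ g⁻¹((r,∞])`, then `ν(C) ≥ (g·μ)(C)` on the generated algebra; in particular
`ν ≥ g·μ` on `L`. -/
theorem stmt18 (L : Set (Set X)) (hL : IsLatt L) (g : X → ℝ≥0∞) (hg : MemL L g)
    (ν μ : Set X → ℝ≥0∞) (hν : IsVal L ν) (hμ : IsVal L μ)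
    (hνb : ν Set.univ < ⊤) (hμb : μ Set.univ < ⊤)
    (ν' μ' : Set X → ℝ≥0∞)
    (hν' : IsVal (genAlg L) ν') (hν'e : ∀ U ∈ L, ν' U = ν U)
    (hμ' : IsVal (genAlg L) μ') (hμ'e : ∀ U ∈ L, μ' U = μ U)
    (hyp : ∀ r : ℝ≥0, IsDyadic r → ∀ C : Set X, IsCrescent L C →
      C ⊆ {x | (r : ℝ≥0∞) < g x} → (r : ℝ≥0∞) * μ' C ≤ ν' C) :
    (∀ C ∈ genAlg L, densF g μ' C ≤ ν' C) ∧ ∀ U ∈ L, densF g μ U ≤ ν U := by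
  have hyp' := hyp_genAlg hL hν' hμ' hyp
  have hμb' : μ' Set.univ < ⊤ := by
    rw [hμ'e Set.univ hL.2.1]; exact hμb
  have part1 : ∀ C ∈ genAlg L, densF g μ' C ≤ ν' C := fun C hC =>
    main_bound hL hg hν' hμ' hμb' hyp' hC
  refine ⟨part1, fun U hU => ?_⟩
  have heq : densF g μ U = densF g μ' U := by
    unfold densF riem
    refine MeasureTheory.lintegral_congr fun t => ?_
    show μ (U ∩ {x | ((t.toNNReal : ℝ≥0∞)) < g x}) = μ' (U ∩ {x | ((t.toNNReal : ℝ≥0∞)) < g x})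
    rw [hμ'e _ (hL.2.2.2 U hU _ (hg _))]
  rw [heq, ← hν'e U hU]
  exact part1 U (genAlg_mem_of_mem hU)
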